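/- Full simulation theorem (abstract form): for every register machine program P and every initial register assignment, if the register machine halts in n steps with final register values v, then the translated MPPC system, started from the corresponding initial metabolite state (I_1 = 1, all other flags 0, register metabolites equal to the initial register values), reaches after finitely many steps a state with HALT = 1 whose register metabolites equal v, and this state is a fixed point. -/

import Mathlib

/-- Register machine instructions over registers indexed by `Fin r`. -/
inductive Instr (r : ℕ) where
  | inc (i : Fin r)
  | dec (i : Fin r)
  | jnz (i : Fin r) (k : ℕ)
  | halt
deriving DecidableEq

/-- Small-step semantics of a register machine: configuration `(pc, R)`;
`none` when the machine is halted (HALT instruction or pc out of range). -/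
def rmStep {r : ℕ} (P : List (Instr r)) (c : ℕ × (Fin r → ℕ)) :
    Option (ℕ × (Fin r → ℕ)) :=
  match P[c.1]? with
  | none => none
  | some .halt => none
  | some (.inc i) => some (c.1 + 1, Function.update c.2 i (c.2 i + 1))
  | some (.dec i) => some (c.1 + 1, Function.update c.2 i (c.2 i - 1))
  | some (.jnz i k) => some (if c.2 i ≠ 0 then k else c.1 + 1, c.2)

/-- Run the register machine for `n` steps. -/
def rmIter {r : ℕ} (P : List (Instr r)) : ℕ → ℕ × (Fin r → ℕ) → Option (ℕ × (Fin r → ℕ))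
  | 0, c => some c
  | n + 1, c => (rmStep P c).bind (rmIter P n)

/-- State of the translated MP system: instruction-pointer flags `I`, virtual-comparison
flags `L`, the `halt` flag, and register metabolites `R`. -/
structure MPState (r : ℕ) where
  I : ℕ → ℕ
  L : ℕ → ℕ
  halt : ℕ
  R : Fin r → ℕ

/-- Flux consuming register metabolite `i` contributed by instruction `j`
(only `DEC` rules `R_i → ∅`, flux `I_j`, with positive control). -/
def decFlux {r : ℕ} (P : List (Instr r)) (s : MPState r) (j : ℕ) (i : Fin r) : ℕ :=
  match P[j]? with
  | some (.dec i') => if i' = i then (if s.R i < s.I j then 0 else s.I j) else 0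
  | _ => 0

/-- Flux producing register metabolite `i` contributed by instruction `j`
(only `INC` rules `∅ → R_i`, flux `I_j`). -/
def incFlux {r : ℕ} (P : List (Instr r)) (s : MPState r) (j : ℕ) (i : Fin r) : ℕ :=
  match P[j]? with
  | some (.inc i') => if i' = i then s.I j else 0
  | _ => 0

/-- Production into pointer flag `I_m` contributed by instruction `j`:
sequential rules `I_j → I_{j+1}` (flux `I_j`) for `INC`/`DEC`, and the `JNZ` rules
`∅ → I_{j+1}` (flux `I_j - R_i`, truncated) and `L_j → I_k` (flux `L_j - I_{j+1}`, truncated). -/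
def prodI {r : ℕ} (P : List (Instr r)) (s : MPState r) (j m : ℕ) : ℕ :=
  match P[j]? with
  | some (.inc _) => if j + 1 = m then s.I j else 0
  | some (.dec _) => if j + 1 = m then s.I j else 0
  | some (.jnz i k) =>
      (if j + 1 = m then s.I j - s.R i else 0) + (if k = m then s.L j - s.I (j + 1) else 0)
  | _ => 0

/-- One parallel MP update step of the translated system (EMA with positive control). -/
def mpStep {r : ℕ} (P : List (Instr r)) (s : MPState r) : MPState r where
  I := fun m =>
    (if m < P.length then s.I m - s.I m else s.I m) +
      ∑ j ∈ Finset.range P.length, prodI P s j m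
  L := fun m =>
    match P[m]? with
    | some (.jnz _ _) => s.L m - ((s.L m - s.I (m + 1)) + s.I (m + 1)) + s.I m
    | _ => s.L m
  halt := s.halt + ∑ j ∈ Finset.range P.length,
    (if P[j]? = some .halt then s.I j else 0)
  R := fun i => s.R i + (∑ j ∈ Finset.range P.length, incFlux P s j i) -
    ∑ j ∈ Finset.range P.length, decFlux P s j i

/-- Initial metabolite state of the translated MP system: `I_0 = 1` (the first
instruction), all other flags `0`, register metabolites equal to the initial registers. -/
def mpInit {r : ℕ} (R0 : Fin r → ℕ) : MPState r where
  I := fun m => if m = 0 then 1 else 0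
  L := fun _ => 0
  halt := 0
  R := R0


section SimAux

variable {r : ℕ}

/-- The MP state corresponding to a register machine configuration `(pc, R)`. -/
def conf (pc : ℕ) (R : Fin r → ℕ) : MPState r :=
  ⟨fun m => if m = pc then 1 else 0, fun _ => 0, 0, R⟩

/-- Intermediate state after the first MP step of a `JNZ` with nonzero tested register. -/
def midT (pc : ℕ) (R : Fin r → ℕ) : MPState r :=
  ⟨fun _ => 0, fun m => if m = pc then 1 else 0, 0, R⟩

/-- Intermediate state after the first MP step of a `JNZ` with zero tested register. -/
def midZ (pc : ℕ) (R : Fin r → ℕ) : MPState r :=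
  ⟨fun m => if m = pc + 1 then 1 else 0, fun m => if m = pc then 1 else 0, 0, R⟩

/-- The halted MP state. -/
def haltSt (R : Fin r → ℕ) : MPState r :=
  ⟨fun _ => 0, fun _ => 0, 1, R⟩

lemma mpext {s t : MPState r} (hI : s.I = t.I) (hL : s.L = t.L)
    (hh : s.halt = t.halt) (hR : s.R = t.R) : s = t := by
  cases s; cases t; simp_all

lemma len_of_get {P : List (Instr r)} {pc : ℕ} {a : Instr r}
    (h : P[pc]? = some a) : pc < P.length := by
  rcases List.getElem?_eq_some_iff.mp h with ⟨h1, -⟩; exact h1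

lemma prodI_zero (P : List (Instr r)) (s : MPState r) (j m : ℕ)
    (hI : s.I j = 0) (hL : s.L j = 0) : prodI P s j m = 0 := by
  unfold prodI
  rcases h : P[j]? with _ | ins
  · rfl
  · cases ins <;> simp [hI, hL, Nat.zero_sub]

lemma incFlux_zero (P : List (Instr r)) (s : MPState r) (j : ℕ) (i : Fin r)
    (hI : s.I j = 0) : incFlux P s j i = 0 := by
  unfold incFlux
  rcases h : P[j]? with _ | ins
  · rfl
  · cases ins <;> simp [hI]

lemma decFlux_zero (P : List (Instr r)) (s : MPState r) (j : ℕ) (i : Fin r)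
    (hI : s.I j = 0) : decFlux P s j i = 0 := by
  unfold decFlux
  rcases h : P[j]? with _ | ins
  · rfl
  · cases ins <;> simp [hI]

lemma sum_one {n pc : ℕ} (hpc : pc < n) (f : ℕ → ℕ) (h0 : ∀ j, j ≠ pc → f j = 0) :
    ∑ j ∈ Finset.range n, f j = f pc :=
  Finset.sum_eq_single_of_mem pc (Finset.mem_range.2 hpc) (fun j _ hj => h0 j hj)

lemma stepInc (P : List (Instr r)) (pc : ℕ) (R : Fin r → ℕ) (i : Fin r)
    (hg : P[pc]? = some (.inc i)) :
    mpStep P (conf pc R) = conf (pc + 1) (Function.update R i (R i + 1)) := by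
  have hlt : pc < P.length := len_of_get hg
  refine mpext (funext fun m => ?_) (funext fun m => ?_) ?_ (funext fun i' => ?_)
  · show (if m < P.length then (conf pc R).I m - (conf pc R).I m else (conf pc R).I m)
      + ∑ j ∈ Finset.range P.length, prodI P (conf pc R) j m
      = (conf (pc + 1) _).I m
    rw [sum_one hlt _ (fun j hj => prodI_zero P _ j m (by simp [conf, hj]) rfl)]
    have h1 : (if m < P.length then (conf pc R).I m - (conf pc R).I m
        else (conf pc R).I m) = 0 := by
      split
      · exact Nat.sub_self _
      · simp only [conf]; rw [if_neg]; omega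
    rw [h1]
    simp only [conf, prodI, hg, if_pos rfl, Nat.zero_add]
    by_cases hm : m = pc + 1
    · simp [hm]
    · simp [hm, Ne.symm hm]
  · show (match P[m]? with
      | some (.jnz _ _) => (conf pc R).L m - (((conf pc R).L m - (conf pc R).I (m + 1))
          + (conf pc R).I (m + 1)) + (conf pc R).I m
      | _ => (conf pc R).L m) = (conf (pc + 1) _).L m
    rcases h : P[m]? with _ | ins
    · rfl
    · cases ins <;> try rfl
      case jnz i' k' =>
        have hm : m ≠ pc := by rintro rfl; rw [hg] at h; simp at h
        simp [conf, hm, Nat.zero_sub]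
  · show (conf pc R).halt + ∑ j ∈ Finset.range P.length,
        (if P[j]? = some .halt then (conf pc R).I j else 0) = (conf (pc + 1) _).halt
    rw [sum_one hlt _ (fun j hj => by simp [conf, hj]), hg]
    simp [conf]
  · show (conf pc R).R i' + (∑ j ∈ Finset.range P.length, incFlux P (conf pc R) j i')
      - ∑ j ∈ Finset.range P.length, decFlux P (conf pc R) j i' = _
    rw [sum_one hlt _ (fun j hj => incFlux_zero P _ j i' (by simp [conf, hj])),
      sum_one hlt _ (fun j hj => decFlux_zero P _ j i' (by simp [conf, hj]))]
    simp only [incFlux, decFlux, hg, conf, if_pos rfl]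
    by_cases hi : i = i'
    · subst hi; simp
    · simp [hi, Ne.symm hi, Function.update_apply]

lemma stepDec (P : List (Instr r)) (pc : ℕ) (R : Fin r → ℕ) (i : Fin r)
    (hg : P[pc]? = some (.dec i)) :
    mpStep P (conf pc R) = conf (pc + 1) (Function.update R i (R i - 1)) := by
  have hlt : pc < P.length := len_of_get hg
  refine mpext (funext fun m => ?_) (funext fun m => ?_) ?_ (funext fun i' => ?_)
  · show (if m < P.length then (conf pc R).I m - (conf pc R).I m else (conf pc R).I m)
      + ∑ j ∈ Finset.range P.length, prodI P (conf pc R) j m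
      = (conf (pc + 1) _).I m
    rw [sum_one hlt _ (fun j hj => prodI_zero P _ j m (by simp [conf, hj]) rfl)]
    have h1 : (if m < P.length then (conf pc R).I m - (conf pc R).I m
        else (conf pc R).I m) = 0 := by
      split
      · exact Nat.sub_self _
      · simp only [conf]; rw [if_neg]; omega
    rw [h1]
    simp only [conf, prodI, hg, if_pos rfl, Nat.zero_add]
    by_cases hm : m = pc + 1
    · simp [hm]
    · simp [hm, Ne.symm hm]
  · show (match P[m]? with
      | some (.jnz _ _) => (conf pc R).L m - (((conf pc R).L m - (conf pc R).I (m + 1))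
          + (conf pc R).I (m + 1)) + (conf pc R).I m
      | _ => (conf pc R).L m) = (conf (pc + 1) _).L m
    rcases h : P[m]? with _ | ins
    · rfl
    · cases ins <;> try rfl
      case jnz i' k' =>
        have hm : m ≠ pc := by rintro rfl; rw [hg] at h; simp at h
        simp [conf, hm, Nat.zero_sub]
  · show (conf pc R).halt + ∑ j ∈ Finset.range P.length,
        (if P[j]? = some .halt then (conf pc R).I j else 0) = (conf (pc + 1) _).halt
    rw [sum_one hlt _ (fun j hj => by simp [conf, hj]), hg]
    simp [conf]
  · show (conf pc R).R i' + (∑ j ∈ Finset.range P.length, incFlux P (conf pc R) j i')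
      - ∑ j ∈ Finset.range P.length, decFlux P (conf pc R) j i' = _
    rw [sum_one hlt _ (fun j hj => incFlux_zero P _ j i' (by simp [conf, hj])),
      sum_one hlt _ (fun j hj => decFlux_zero P _ j i' (by simp [conf, hj]))]
    simp only [incFlux, decFlux, hg, conf, if_pos rfl]
    by_cases hi : i = i'
    · subst hi
      simp only [if_pos rfl, Function.update_self, Nat.add_zero]
      by_cases h0 : R i = 0 <;> simp [h0]
    · simp [hi, Function.update_apply, Ne.symm hi]

lemma stepJnzPos (P : List (Instr r)) (pc : ℕ) (R : Fin r → ℕ) (i : Fin r) (k : ℕ)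
    (hg : P[pc]? = some (.jnz i k)) (hR : R i ≠ 0) :
    mpStep P (conf pc R) = midT pc R := by
  have hlt : pc < P.length := len_of_get hg
  have h1i : (1 : ℕ) - R i = 0 := Nat.sub_eq_zero_of_le (Nat.one_le_iff_ne_zero.mpr hR)
  refine mpext (funext fun m => ?_) (funext fun m => ?_) ?_ (funext fun i' => ?_)
  · show (if m < P.length then (conf pc R).I m - (conf pc R).I m else (conf pc R).I m)
      + ∑ j ∈ Finset.range P.length, prodI P (conf pc R) j m = (midT pc R).I m
    rw [sum_one hlt _ (fun j hj => prodI_zero P _ j m (by simp [conf, hj]) rfl)]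
    have h1 : (if m < P.length then (conf pc R).I m - (conf pc R).I m
        else (conf pc R).I m) = 0 := by
      split
      · exact Nat.sub_self _
      · simp only [conf]; rw [if_neg]; omega
    rw [h1]
    simp only [prodI, hg]
    simp [conf, midT, h1i, Nat.zero_sub]
  · show (match P[m]? with
      | some (.jnz _ _) => (conf pc R).L m - (((conf pc R).L m - (conf pc R).I (m + 1))
          + (conf pc R).I (m + 1)) + (conf pc R).I m
      | _ => (conf pc R).L m) = (midT pc R).L m
    by_cases hm : m = pc
    · subst hm
      rw [hg]
      simp [conf, midT, Nat.zero_sub]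
    · rcases h : P[m]? with _ | ins
      · simp [conf, midT, hm]
      · cases ins <;> simp [conf, midT, hm, Nat.zero_sub]
  · show (conf pc R).halt + ∑ j ∈ Finset.range P.length,
        (if P[j]? = some .halt then (conf pc R).I j else 0) = (midT pc R).halt
    rw [sum_one hlt _ (fun j hj => by simp [conf, hj]), hg]
    simp [conf, midT]
  · show (conf pc R).R i' + (∑ j ∈ Finset.range P.length, incFlux P (conf pc R) j i')
      - ∑ j ∈ Finset.range P.length, decFlux P (conf pc R) j i' = (midT pc R).R i'
    rw [sum_one hlt _ (fun j hj => incFlux_zero P _ j i' (by simp [conf, hj])),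
      sum_one hlt _ (fun j hj => decFlux_zero P _ j i' (by simp [conf, hj]))]
    simp only [incFlux, decFlux, hg]
    simp [conf, midT]

lemma stepMidPos (P : List (Instr r)) (pc : ℕ) (R : Fin r → ℕ) (i : Fin r) (k : ℕ)
    (hg : P[pc]? = some (.jnz i k)) :
    mpStep P (midT pc R) = conf k R := by
  have hlt : pc < P.length := len_of_get hg
  refine mpext (funext fun m => ?_) (funext fun m => ?_) ?_ (funext fun i' => ?_)
  · show (if m < P.length then (midT pc R).I m - (midT pc R).I m else (midT pc R).I m)
      + ∑ j ∈ Finset.range P.length, prodI P (midT pc R) j m = (conf k R).I m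
    rw [sum_one hlt _ (fun j hj => prodI_zero P _ j m rfl (by simp [midT, hj]))]
    have h1 : (if m < P.length then (midT pc R).I m - (midT pc R).I m
        else (midT pc R).I m) = 0 := by simp [midT]
    rw [h1]
    simp only [conf, prodI, hg, midT, Nat.zero_add, if_pos rfl, Nat.zero_sub,
      Nat.sub_zero]
    by_cases hm : m = k
    · simp [hm]
    · simp [hm, Ne.symm hm]
  · show (match P[m]? with
      | some (.jnz _ _) => (midT pc R).L m - (((midT pc R).L m - (midT pc R).I (m + 1))
          + (midT pc R).I (m + 1)) + (midT pc R).I m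
      | _ => (midT pc R).L m) = (conf k R).L m
    by_cases hm : m = pc
    · subst hm
      rw [hg]
      simp [conf, midT]
    · rcases h : P[m]? with _ | ins
      · simp [conf, midT, hm]
      · cases ins <;> simp [conf, midT, hm, Nat.zero_sub]
  · show (midT pc R).halt + ∑ j ∈ Finset.range P.length,
        (if P[j]? = some .halt then (midT pc R).I j else 0) = (conf k R).halt
    rw [Finset.sum_eq_zero (fun j _ => by simp [midT])]
    rfl
  · show (midT pc R).R i' + (∑ j ∈ Finset.range P.length, incFlux P (midT pc R) j i')
      - ∑ j ∈ Finset.range P.length, decFlux P (midT pc R) j i' = (conf k R).R i'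
    rw [Finset.sum_eq_zero (fun j _ => incFlux_zero P _ j i' rfl),
      Finset.sum_eq_zero (fun j _ => decFlux_zero P _ j i' rfl)]
    simp [conf, midT]

lemma stepJnzZero (P : List (Instr r)) (pc : ℕ) (R : Fin r → ℕ) (i : Fin r) (k : ℕ)
    (hg : P[pc]? = some (.jnz i k)) (hR : R i = 0) :
    mpStep P (conf pc R) = midZ pc R := by
  have hlt : pc < P.length := len_of_get hg
  refine mpext (funext fun m => ?_) (funext fun m => ?_) ?_ (funext fun i' => ?_)
  · show (if m < P.length then (conf pc R).I m - (conf pc R).I m else (conf pc R).I m)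
      + ∑ j ∈ Finset.range P.length, prodI P (conf pc R) j m = (midZ pc R).I m
    rw [sum_one hlt _ (fun j hj => prodI_zero P _ j m (by simp [conf, hj]) rfl)]
    have h1 : (if m < P.length then (conf pc R).I m - (conf pc R).I m
        else (conf pc R).I m) = 0 := by
      split
      · exact Nat.sub_self _
      · simp only [conf]; rw [if_neg]; omega
    rw [h1]
    simp only [conf, prodI, hg, midZ, if_pos rfl, Nat.zero_add, hR, Nat.sub_zero,
      Nat.zero_sub]
    by_cases hm : m = pc + 1
    · simp [hm]
    · simp [hm, Ne.symm hm]
  · show (match P[m]? with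
      | some (.jnz _ _) => (conf pc R).L m - (((conf pc R).L m - (conf pc R).I (m + 1))
          + (conf pc R).I (m + 1)) + (conf pc R).I m
      | _ => (conf pc R).L m) = (midZ pc R).L m
    by_cases hm : m = pc
    · subst hm
      rw [hg]
      simp [conf, midZ, Nat.zero_sub]
    · rcases h : P[m]? with _ | ins
      · simp [conf, midZ, hm]
      · cases ins <;> simp [conf, midZ, hm, Nat.zero_sub]
  · show (conf pc R).halt + ∑ j ∈ Finset.range P.length,
        (if P[j]? = some .halt then (conf pc R).I j else 0) = (midZ pc R).halt
    rw [sum_one hlt _ (fun j hj => by simp [conf, hj]), hg]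
    simp [conf, midZ]
  · show (conf pc R).R i' + (∑ j ∈ Finset.range P.length, incFlux P (conf pc R) j i')
      - ∑ j ∈ Finset.range P.length, decFlux P (conf pc R) j i' = (midZ pc R).R i'
    rw [sum_one hlt _ (fun j hj => incFlux_zero P _ j i' (by simp [conf, hj])),
      sum_one hlt _ (fun j hj => decFlux_zero P _ j i' (by simp [conf, hj]))]
    simp only [incFlux, decFlux, hg]
    simp [conf, midZ]

lemma midZ_step (P : List (Instr r)) (pc : ℕ) (R : Fin r → ℕ) (i : Fin r) (k : ℕ)
    (hg : P[pc]? = some (.jnz i k)) :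
    mpStep P (midZ pc R) = mpStep P (conf (pc + 1) R) := by
  have hI : (midZ pc R).I = (conf (pc + 1) R).I := rfl
  have hprod : ∀ j m, prodI P (midZ pc R) j m = prodI P (conf (pc + 1) R) j m := by
    intro j m
    by_cases hj : j = pc
    · subst hj
      simp only [prodI, hg]
      simp [midZ, conf, Nat.zero_sub, Nat.sub_self]
    · unfold prodI
      rcases h : P[j]? with _ | ins
      · rfl
      · cases ins <;> simp [midZ, conf, hj]
  refine mpext (funext fun m => ?_) (funext fun m => ?_) ?_ (funext fun i' => ?_)
  · show (if m < P.length then (midZ pc R).I m - (midZ pc R).I m else (midZ pc R).I m)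
      + ∑ j ∈ Finset.range P.length, prodI P (midZ pc R) j m = _
    rw [Finset.sum_congr rfl (fun j _ => hprod j m), hI]
    rfl
  · show (match P[m]? with
      | some (.jnz _ _) => (midZ pc R).L m - (((midZ pc R).L m - (midZ pc R).I (m + 1))
          + (midZ pc R).I (m + 1)) + (midZ pc R).I m
      | _ => (midZ pc R).L m) = (match P[m]? with
      | some (.jnz _ _) => (conf (pc+1) R).L m - (((conf (pc+1) R).L m
          - (conf (pc+1) R).I (m + 1)) + (conf (pc+1) R).I (m + 1)) + (conf (pc+1) R).I m
      | _ => (conf (pc+1) R).L m)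
    by_cases hm : m = pc
    · subst hm
      rw [hg]
      simp [midZ, conf]
    · rcases h : P[m]? with _ | ins
      · simp [midZ, conf, hm]
      · cases ins <;> simp [midZ, conf, hm]
  · rfl
  · rfl

lemma stepHalt (P : List (Instr r)) (pc : ℕ) (R : Fin r → ℕ)
    (hg : P[pc]? = some .halt) :
    mpStep P (conf pc R) = haltSt R := by
  have hlt : pc < P.length := len_of_get hg
  refine mpext (funext fun m => ?_) (funext fun m => ?_) ?_ (funext fun i' => ?_)
  · show (if m < P.length then (conf pc R).I m - (conf pc R).I m else (conf pc R).I m)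
      + ∑ j ∈ Finset.range P.length, prodI P (conf pc R) j m = (haltSt R).I m
    rw [sum_one hlt _ (fun j hj => prodI_zero P _ j m (by simp [conf, hj]) rfl)]
    have h1 : (if m < P.length then (conf pc R).I m - (conf pc R).I m
        else (conf pc R).I m) = 0 := by
      split
      · exact Nat.sub_self _
      · simp only [conf]; rw [if_neg]; omega
    rw [h1]
    simp only [prodI, hg]
    simp [haltSt]
  · show (match P[m]? with
      | some (.jnz _ _) => (conf pc R).L m - (((conf pc R).L m - (conf pc R).I (m + 1))
          + (conf pc R).I (m + 1)) + (conf pc R).I m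
      | _ => (conf pc R).L m) = (haltSt R).L m
    rcases h : P[m]? with _ | ins
    · rfl
    · cases ins <;> try rfl
      case jnz i' k' =>
        have hm : m ≠ pc := by rintro rfl; rw [hg] at h; simp at h
        simp [conf, haltSt, hm, Nat.zero_sub]
  · show (conf pc R).halt + ∑ j ∈ Finset.range P.length,
        (if P[j]? = some .halt then (conf pc R).I j else 0) = (haltSt R).halt
    rw [sum_one hlt _ (fun j hj => by simp [conf, hj]), hg]
    simp [conf, haltSt]
  · show (conf pc R).R i' + (∑ j ∈ Finset.range P.length, incFlux P (conf pc R) j i')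
      - ∑ j ∈ Finset.range P.length, decFlux P (conf pc R) j i' = (haltSt R).R i'
    rw [sum_one hlt _ (fun j hj => incFlux_zero P _ j i' (by simp [conf, hj])),
      sum_one hlt _ (fun j hj => decFlux_zero P _ j i' (by simp [conf, hj]))]
    simp only [incFlux, decFlux, hg]
    simp [conf, haltSt]

lemma haltFixed (P : List (Instr r)) (R : Fin r → ℕ) :
    mpStep P (haltSt R) = haltSt R := by
  refine mpext (funext fun m => ?_) (funext fun m => ?_) ?_ (funext fun i' => ?_)
  · show (if m < P.length then (haltSt R).I m - (haltSt R).I m else (haltSt R).I m)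
      + ∑ j ∈ Finset.range P.length, prodI P (haltSt R) j m = (haltSt R).I m
    rw [Finset.sum_eq_zero (fun j _ => prodI_zero P _ j m rfl rfl)]
    simp [haltSt]
  · show (match P[m]? with
      | some (.jnz _ _) => (haltSt R).L m - (((haltSt R).L m - (haltSt R).I (m + 1))
          + (haltSt R).I (m + 1)) + (haltSt R).I m
      | _ => (haltSt R).L m) = (haltSt R).L m
    rcases h : P[m]? with _ | ins
    · rfl
    · cases ins <;> simp [haltSt]
  · show (haltSt R).halt + ∑ j ∈ Finset.range P.length,
        (if P[j]? = some .halt then (haltSt R).I j else 0) = (haltSt R).halt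
    rw [Finset.sum_eq_zero (fun j _ => by simp [haltSt])]
    rfl
  · show (haltSt R).R i' + (∑ j ∈ Finset.range P.length, incFlux P (haltSt R) j i')
      - ∑ j ∈ Finset.range P.length, decFlux P (haltSt R) j i' = (haltSt R).R i'
    rw [Finset.sum_eq_zero (fun j _ => incFlux_zero P _ j i' rfl),
      Finset.sum_eq_zero (fun j _ => decFlux_zero P _ j i' rfl)]
    simp

lemma sim (P : List (Instr r)) : ∀ (n pc : ℕ) (R : Fin r → ℕ) (pcf : ℕ) (v : Fin r → ℕ),
    rmIter P n (pc, R) = some (pcf, v) → P[pcf]? = some .halt →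
    ∃ m : ℕ, (mpStep P)^[m + 1] (conf pc R) = haltSt v := by
  intro n
  induction n with
  | zero =>
    intro pc R pcf v hrun hh
    simp only [rmIter, Option.some.injEq, Prod.mk.injEq] at hrun
    obtain ⟨h1, h2⟩ := hrun
    subst h1; subst h2
    exact ⟨0, by simpa using stepHalt P pc R hh⟩
  | succ n ih =>
    intro pc R pcf v hrun hh
    rw [rmIter] at hrun
    rcases hstep : rmStep P (pc, R) with _ | c
    · rw [hstep] at hrun; simp at hrun
    · rw [hstep] at hrun
      simp only [Option.bind_some] at hrun
      unfold rmStep at hstep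
      rcases hg : P[pc]? with _ | ins
      · rw [hg] at hstep; simp at hstep
      · rw [hg] at hstep
        cases ins with
        | inc i =>
          simp only [Option.some.injEq] at hstep
          subst hstep
          obtain ⟨m, hm⟩ := ih _ _ pcf v hrun hh
          refine ⟨m + 1, ?_⟩
          rw [Function.iterate_succ_apply, stepInc P pc R i hg]
          exact hm
        | dec i =>
          simp only [Option.some.injEq] at hstep
          subst hstep
          obtain ⟨m, hm⟩ := ih _ _ pcf v hrun hh
          refine ⟨m + 1, ?_⟩
          rw [Function.iterate_succ_apply, stepDec P pc R i hg]
          exact hm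
        | jnz i k =>
          simp only [Option.some.injEq] at hstep
          subst hstep
          by_cases hR : R i = 0
          · rw [if_neg (by simp [hR] : ¬(R i ≠ 0))] at hrun
            obtain ⟨m, hm⟩ := ih _ _ pcf v hrun hh
            refine ⟨m + 1, ?_⟩
            rw [Function.iterate_succ_apply, stepJnzZero P pc R i k hg hR,
              Function.iterate_succ_apply, midZ_step P pc R i k hg,
              ← Function.iterate_succ_apply]
            exact hm
          · rw [if_pos hR] at hrun
            obtain ⟨m, hm⟩ := ih _ _ pcf v hrun hh
            refine ⟨m + 2, ?_⟩
            rw [Function.iterate_succ_apply, stepJnzPos P pc R i k hg hR,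
              Function.iterate_succ_apply, stepMidPos P pc R i k hg]
            exact hm
        | halt =>
          simp at hstep

end SimAux

/-- Full simulation theorem: for every register machine program `P` and initial registers
`R0`, if the machine halts in `n` steps with final register values `v` (reaching a
configuration whose current instruction is `HALT`), then the translated MPPC system,
started from the corresponding initial metabolite state, reaches after finitely many MP
steps a state with `halt = 1` whose register metabolites equal `v`, and that state is a
fixed point of the MP dynamics. -/
theorem full_simulation {r : ℕ} (P : List (Instr r)) (R0 : Fin r → ℕ) (n : ℕ)
    (pc : ℕ) (v : Fin r → ℕ)
    (hrun : rmIter P n (0, R0) = some (pc, v))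
    (hhalt : P[pc]? = some .halt) :
    ∃ m : ℕ,
      ((mpStep P)^[m] (mpInit R0)).halt = 1 ∧
      ((mpStep P)^[m] (mpInit R0)).R = v ∧
      mpStep P ((mpStep P)^[m] (mpInit R0)) = (mpStep P)^[m] (mpInit R0) := by
  obtain ⟨m, hm⟩ := sim P n 0 R0 pc v hrun hhalt
  have hinit : mpInit R0 = conf 0 R0 := rfl
  refine ⟨m + 1, ?_, ?_, ?_⟩
  · rw [hinit, hm]; rfl
  · rw [hinit, hm]; rfl
  · rw [hinit, hm]
    exact haltFixed P v
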